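/- Let S be an n×n upper-triangular complex matrix with 1's on the diagonal, and for k = 1,…,n let E_k be the matrix with a single 1 in position (k,k). Define M_k = I - E_k(S + Sᵀ). Then S·M_1·M_2·⋯·M_n = -Sᵀ; in particular M_1·M_2·⋯·M_n = -S⁻¹·Sᵀ. -/

import Mathlib

open Matrix

lemma dubrovin_aux (n : ℕ) (S : Matrix (Fin n) (Fin n) ℂ)
    (hupper : ∀ i j : Fin n, j < i → S i j = 0)
    (hdiag : ∀ i : Fin n, S i i = 1) (k : ℕ) (hk : k ≤ n) :
    S * (((List.finRange n).take k).map
        (fun k => (1 : Matrix (Fin n) (Fin n) ℂ) -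
          Matrix.single k k 1 * (S + Sᵀ))).prod =
      Matrix.of (fun i j : Fin n => if (i : ℕ) < k then -S j i else S i j) := by
  induction k with
  | zero =>
    ext i j
    simp
  | succ k ih =>
    have hk' : k < n := hk
    set K : Fin n := ⟨k, hk'⟩ with hK
    have hget : (List.finRange n)[k]? = some K := by
      simp [List.getElem?_eq_getElem, hk', hK]
    rw [List.take_succ, hget]
    simp only [Option.toList_some, List.map_append, List.prod_append, List.map_cons,
      List.map_nil, List.prod_cons, List.prod_nil, mul_one]
    rw [← mul_assoc, ih (le_of_lt hk'), mul_sub, mul_one]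
    have hEA : ∀ x j : Fin n, (Matrix.single K K (1:ℂ) * (S + Sᵀ)) x j =
        if x = K then (S + Sᵀ) K j else 0 := by
      intro x j
      rcases eq_or_ne x K with hx | hx
      · subst hx
        rw [if_pos rfl, Matrix.single_mul_apply_same, one_mul]
      · rw [if_neg hx, Matrix.single_mul_apply_of_ne (h := hx)]
    ext i j
    rw [Matrix.sub_apply, Matrix.mul_apply]
    simp only [hEA, mul_ite, mul_zero, Finset.sum_ite_eq', Finset.mem_univ, if_true,
      Matrix.of_apply]
    have hKk : (K : ℕ) = k := rfl
    rcases lt_trichotomy (i : ℕ) k with h | h | h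
    · have hiK : i < K := by rw [Fin.lt_def, hKk]; exact h
      rw [if_pos h, if_pos h, hupper K i hiK, if_pos (by omega), neg_zero, zero_mul,
        sub_zero]
    · have hiK : i = K := Fin.ext (by rw [hKk]; exact h)
      subst hiK
      rw [if_neg (by omega), if_neg (by omega), hdiag, if_pos (by omega), one_mul,
        Matrix.add_apply, Matrix.transpose_apply]
      ring
    · have hKi : K < i := by rw [Fin.lt_def, hKk]; exact h
      rw [if_neg (by omega), if_neg (by omega), hupper i K hKi, zero_mul, sub_zero,
        if_neg (by omega)]

theorem dubrovin_identity (n : ℕ) (S : Matrix (Fin n) (Fin n) ℂ)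
    (hupper : ∀ i j : Fin n, j < i → S i j = 0)
    (hdiag : ∀ i : Fin n, S i i = 1) :
    S * ((List.finRange n).map
        (fun k => (1 : Matrix (Fin n) (Fin n) ℂ) -
          Matrix.single k k 1 * (S + Sᵀ))).prod = -Sᵀ ∧
    ((List.finRange n).map
        (fun k => (1 : Matrix (Fin n) (Fin n) ℂ) -
          Matrix.single k k 1 * (S + Sᵀ))).prod = -(S⁻¹ * Sᵀ) := by
  have h1 : S * ((List.finRange n).map
      (fun k => (1 : Matrix (Fin n) (Fin n) ℂ) -
        Matrix.single k k 1 * (S + Sᵀ))).prod = -Sᵀ := by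
    have haux := dubrovin_aux n S hupper hdiag n le_rfl
    rw [show (List.finRange n).take n = List.finRange n by
      simp [List.take_of_length_le]] at haux
    rw [haux]
    ext i j
    simp [i.isLt]
  refine ⟨h1, ?_⟩
  have hdet : IsUnit S.det := by
    have hbt : S.BlockTriangular id := fun i j h => hupper i j h
    rw [Matrix.det_of_upperTriangular hbt]
    simp [hdiag]
  have h2 := congrArg (fun M => S⁻¹ * M) h1
  simp only [← mul_assoc, Matrix.nonsing_inv_mul S hdet, one_mul, Matrix.mul_neg] at h2
  exact h2
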